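/- Let G be a controllable n-vertex graph with adjacency matrix A and walk matrix W, and let p be an odd prime such that p² divides det W and W has rank n−1 over ℤ/pℤ. Let v be an integer vector with Wᵀ v ≡ 0 (mod p) entrywise and v ≢ 0 (mod p). If Q is a primitive matrix generated from v, then every entry of the rational matrix Qᵀ A Q is an integer. -/

import Mathlib

open Matrix BigOperators

/-- An adjacency matrix: a symmetric 0-1 integer matrix with zero diagonal. -/
def IsAdjacencyMat {n : ℕ} (A : Matrix (Fin n) (Fin n) ℤ) : Prop :=
  A.IsSymm ∧ (∀ i j, A i j = 0 ∨ A i j = 1) ∧ (∀ i, A i i = 0)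

/-- The walk matrix W = [e, Ae, ..., A^{n-1}e]. -/
def walkMatrix {n : ℕ} (A : Matrix (Fin n) (Fin n) ℤ) : Matrix (Fin n) (Fin n) ℤ :=
  Matrix.of fun i j => ((A ^ (j : ℕ)) *ᵥ fun _ => (1 : ℤ)) i

/-- The all-ones matrix J. -/
def allOnes (n : ℕ) : Matrix (Fin n) (Fin n) ℤ := Matrix.of fun _ _ => 1

/-- Two symmetric integer matrices are generalized cospectral if they are cospectral and
their "complements" J - I - · are cospectral. -/
def GenCospectral {n : ℕ} (A B : Matrix (Fin n) (Fin n) ℤ) : Prop :=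
  A.charpoly = B.charpoly ∧ (allOnes n - 1 - A).charpoly = (allOnes n - 1 - B).charpoly

/-- Two (adjacency) matrices are isomorphic if Pᵀ A P = B for some permutation matrix P. -/
def IsomorphicMat {n : ℕ} (A B : Matrix (Fin n) (Fin n) ℤ) : Prop :=
  ∃ σ : Equiv.Perm (Fin n),
    (σ.toPEquiv.toMatrix : Matrix (Fin n) (Fin n) ℤ)ᵀ * A * σ.toPEquiv.toMatrix = B

/-- A graph (given by its adjacency matrix) is determined by its generalized spectrum. -/
def IsDGS {n : ℕ} (A : Matrix (Fin n) (Fin n) ℤ) : Prop :=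
  ∀ B : Matrix (Fin n) (Fin n) ℤ, IsAdjacencyMat B → GenCospectral A B → IsomorphicMat A B

/-- Membership in the family F_n^p : det W = ±2^⌊n/2⌋ p² b with b odd square-free positive,
p ∤ b, and rank of W over ℤ/pℤ equals n - 1. -/
def MemF {n : ℕ} (p : ℕ) (A : Matrix (Fin n) (Fin n) ℤ) : Prop :=
  IsAdjacencyMat A ∧
  (∃ b : ℤ, 0 < b ∧ Odd b ∧ Squarefree b ∧ ¬ ((p : ℤ) ∣ b) ∧
    ((walkMatrix A).det = 2 ^ (n / 2) * (p : ℤ) ^ 2 * b ∨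
     (walkMatrix A).det = -(2 ^ (n / 2) * (p : ℤ) ^ 2 * b))) ∧
  ((walkMatrix A).map (Int.cast : ℤ → ZMod p)).rank = n - 1

/-- A regular orthogonal matrix: QᵀQ = I and Qe = e. -/
def IsRegularOrthogonal {n : ℕ} (Q : Matrix (Fin n) (Fin n) ℚ) : Prop :=
  Qᵀ * Q = 1 ∧ (Q *ᵥ fun _ => (1 : ℚ)) = fun _ => 1

/-- The level of a rational matrix Q is the smallest positive integer k
such that kQ is an integer matrix. -/
def HasLevel {n : ℕ} (Q : Matrix (Fin n) (Fin n) ℚ) (ℓ : ℕ) : Prop :=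
  IsLeast {k : ℕ | 0 < k ∧ ∀ i j, ∃ m : ℤ, (k : ℚ) * Q i j = (m : ℚ)} ℓ

/-- A primitive matrix: a regular rational orthogonal matrix of level p such that
the integer matrix pQ has rank 1 over ℤ/pℤ. -/
def IsPrimitiveMat {n : ℕ} (p : ℕ) (Q : Matrix (Fin n) (Fin n) ℚ) : Prop :=
  IsRegularOrthogonal Q ∧ HasLevel Q p ∧
  ∃ M : Matrix (Fin n) (Fin n) ℤ,
    M.map (Int.cast : ℤ → ℚ) = (p : ℚ) • Q ∧
    (M.map (Int.cast : ℤ → ZMod p)).rank = 1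

/-- A primitive matrix Q is generated from an integer vector v if every column of the
integer matrix pQ is congruent modulo p to an integer multiple of v. -/
def GeneratedFrom {n : ℕ} (p : ℕ) (Q : Matrix (Fin n) (Fin n) ℚ) (v : Fin n → ℤ) : Prop :=
  IsPrimitiveMat p Q ∧
  ∀ M : Matrix (Fin n) (Fin n) ℤ, M.map (Int.cast : ℤ → ℚ) = (p : ℚ) • Q →
    ∀ j, ∃ c : ℤ, ∀ i, ((M i j : ℤ) : ZMod p) = (c : ZMod p) * ((v i : ℤ) : ZMod p)

/-- w is a perfect p-representative of v: w ≡ v (mod p), wᵀe = p and wᵀw = p². -/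
def IsPerfectRep {n : ℕ} (p : ℕ) (v w : Fin n → ℤ) : Prop :=
  (∀ i, ((w i : ℤ) : ZMod p) = ((v i : ℤ) : ZMod p)) ∧
  (∑ i, w i) = (p : ℤ) ∧ (∑ i, w i * w i) = (p : ℤ) ^ 2

/-- u is the shortest p-representative of v: u ≡ v (mod p) and |uᵢ| ≤ (p-1)/2 for all i. -/
def IsShortestRep {n : ℕ} (p : ℕ) (v u : Fin n → ℤ) : Prop :=
  (∀ i, ((u i : ℤ) : ZMod p) = ((v i : ℤ) : ZMod p)) ∧ ∀ i, |u i| ≤ ((p : ℤ) - 1) / 2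


lemma aux_ker_span {n : ℕ} {F : Type*} [Field F] (C : Matrix (Fin n) (Fin n) F)
    (hr : C.rank = n - 1) (hn : 0 < n) (u x : Fin n → F)
    (hu : C *ᵥ u = 0) (hu0 : u ≠ 0) (hx : C *ᵥ x = 0) : ∃ a : F, x = a • u := by
  have hrn := LinearMap.finrank_range_add_finrank_ker C.mulVecLin
  rw [Module.finrank_pi] at hrn
  have hrank : Module.finrank F (LinearMap.range C.mulVecLin) = n - 1 := hr
  have hker : Module.finrank F (LinearMap.ker C.mulVecLin) = 1 := by
    simp only [Fintype.card_fin] at hrn; omega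
  have hsp : (Submodule.span F {u}) = LinearMap.ker C.mulVecLin := by
    apply Submodule.eq_of_le_of_finrank_eq
    · rw [Submodule.span_singleton_le_iff_mem]; exact hu
    · rw [finrank_span_singleton hu0, hker]
  have hxm : x ∈ Submodule.span F {u} := by rw [hsp]; exact hx
  obtain ⟨a, ha⟩ := Submodule.mem_span_singleton.1 hxm
  exact ⟨a, ha.symm⟩

lemma aux_adj_ne_zero {n : ℕ} {F : Type*} [Field F] (B : Matrix (Fin n) (Fin n) F)
    (hr : B.rank = n - 1) (hn : 0 < n) (hdet : B.det = 0) : adjugate B ≠ 0 := by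
  intro h0
  set C := Bᵀ with hC
  have hdetC : C.det = 0 := by rw [hC, det_transpose]; exact hdet
  have hrC : C.rank = n - 1 := by rw [hC, rank_transpose]; exact hr
  have hcram1 : ∀ i : Fin n, cramer C (Pi.single i 1) = 0 := by
    intro i
    have := congrFun (congrFun (adjugate_def B) i)
    funext j
    have h2 := congrFun (congrFun h0 i) j
    rw [adjugate_def] at h2
    simpa using h2
  have hcram : ∀ b : Fin n → F, cramer C b = 0 := by
    intro b
    have hb : b = ∑ i, b i • (Pi.single i (1 : F) : Fin n → F) := by
      funext j
      simp [Pi.single_apply, Finset.sum_ite_eq', eq_comm]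
    rw [hb, map_sum]
    simp only [_root_.map_smul, hcram1, smul_zero, Finset.sum_const_zero]
  obtain ⟨u, hu0, hu⟩ := Matrix.exists_mulVec_eq_zero_iff.2 hdetC
  obtain ⟨k, hk⟩ : ∃ k, u k ≠ 0 := by
    by_contra h; push_neg at h; exact hu0 (funext h)
  have hrange : LinearMap.range C.mulVecLin ≠ ⊤ := by
    intro htop
    have : C.rank = n := by
      rw [Matrix.rank, htop]
      simp [Module.finrank_pi]
    omega
  obtain ⟨b, hb⟩ : ∃ b, b ∉ LinearMap.range C.mulVecLin := by
    by_contra h; push_neg at h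
    exact hrange (Submodule.eq_top_iff'.2 h)
  have hdU : (C.updateCol k b).det = 0 := by
    have := congrFun (hcram b) k
    rwa [cramer_apply] at this
  obtain ⟨x, hx0, hx⟩ := Matrix.exists_mulVec_eq_zero_iff.2 hdU
  have hkey : (C.updateCol k b) *ᵥ x = C *ᵥ (Function.update x k 0) + x k • b := by
    funext i
    simp only [Matrix.mulVec, dotProduct, Pi.add_apply, Pi.smul_apply, smul_eq_mul]
    rw [Finset.sum_eq_sum_sdiff_singleton_add (Finset.mem_univ k),
      Finset.sum_eq_sum_sdiff_singleton_add (Finset.mem_univ k)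
        (fun j => C i j * Function.update x k 0 j)]
    have : ∀ j ∈ Finset.univ \ {k}, (C.updateCol k b) i j * x j
        = C i j * Function.update x k 0 j := by
      intro j hj
      rw [Finset.mem_sdiff, Finset.mem_singleton] at hj
      rw [Matrix.updateCol_apply, if_neg hj.2, Function.update_apply, if_neg hj.2]
    rw [Finset.sum_congr rfl this]
    simp [Matrix.updateCol_apply, Function.update_apply]
    ring
  rw [hx] at hkey
  by_cases hxk : x k = 0
  · have hx' : Function.update x k 0 = x := by
      rw [← hxk]; exact Function.update_eq_self k x
    rw [hx', hxk, zero_smul, add_zero] at hkey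
    obtain ⟨a, ha⟩ := aux_ker_span C hrC hn u x hu hu0 hkey.symm
    have : x k = a * u k := by rw [ha]; simp
    rw [hxk] at this
    have ha0 : a = 0 := by
      rcases mul_eq_zero.1 this.symm with h | h
      · exact h
      · exact absurd h hk
    rw [ha0, zero_smul] at ha
    exact hx0 ha
  · apply hb
    refine ⟨(-(x k)⁻¹) • Function.update x k 0, ?_⟩
    have h1 : C *ᵥ Function.update x k 0 = -(x k • b) := by
      rw [eq_comm, neg_eq_iff_add_eq_zero, add_comm]; exact hkey.symm
    rw [Matrix.mulVecLin_apply, Matrix.mulVec_smul, h1]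
    rw [smul_neg, neg_smul, neg_neg, smul_smul, inv_mul_cancel₀ hxk, one_smul]

lemma aux_sum_mulVec {n : ℕ} (s : Finset ℕ) (c : ℕ → ℤ) (B : ℕ → Matrix (Fin n) (Fin n) ℤ)
    (w u : Fin n → ℤ) :
    ((∑ k ∈ s, c k • B k) *ᵥ w) ⬝ᵥ u = ∑ k ∈ s, c k * ((B k *ᵥ w) ⬝ᵥ u) := by
  induction s using Finset.induction_on with
  | empty => simp
  | insert _ _ hns ih =>
    rw [Finset.sum_insert hns, Finset.sum_insert hns, Matrix.add_mulVec, add_dotProduct,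
      Matrix.smul_mulVec, smul_dotProduct, smul_eq_mul, ih]

theorem stmt11' (n p : ℕ) (hp : p.Prime) (hpodd : Odd p)
    (A : Matrix (Fin n) (Fin n) ℤ) (hAs : Aᵀ = A)
    (hctrl : (walkMatrix A).det ≠ 0)
    (hp2 : ((p : ℤ)) ^ 2 ∣ (walkMatrix A).det)
    (hrank : ((walkMatrix A).map (Int.cast : ℤ → ZMod p)).rank = n - 1)
    (v : Fin n → ℤ)
    (hv : ∀ i, ((((walkMatrix A)ᵀ *ᵥ v) i : ℤ) : ZMod p) = 0)
    (hv0 : ∃ i, ((v i : ℤ) : ZMod p) ≠ 0)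
    (Q : Matrix (Fin n) (Fin n) ℚ)
    (hQorth : Qᵀ * Q = 1)
    (M0 : Matrix (Fin n) (Fin n) ℤ)
    (hM0 : M0.map (Int.cast : ℤ → ℚ) = (p : ℚ) • Q)
    (hM0rank : (M0.map (Int.cast : ℤ → ZMod p)).rank = 1)
    (hgen : ∀ j, ∃ c : ℤ, ∀ i, ((M0 i j : ℤ) : ZMod p) = (c : ZMod p) * ((v i : ℤ) : ZMod p)) :
    ∀ a b, ∃ m : ℤ, (Qᵀ * A.map (Int.cast : ℤ → ℚ) * Q) a b = (m : ℚ) := by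
  haveI : Fact p.Prime := ⟨hp⟩
  set W := walkMatrix A with hWdef
  obtain ⟨i00, hi00⟩ := hv0
  have hn : 0 < n := i00.pos
  have hp0 : (p : ℤ) ≠ 0 := Int.natCast_ne_zero.2 hp.ne_zero
  have hpQ0 : (p : ℚ) ≠ 0 := Nat.cast_ne_zero.2 hp.ne_zero
  have hpdvd : (p : ℤ) ∣ W.det := dvd_trans (dvd_pow_self _ two_ne_zero) hp2
  have hpp : (p : ℤ) ∣ (p : ℤ)^2 := dvd_pow_self _ two_ne_zero
  have hmapmulQ : ∀ X Y : Matrix (Fin n) (Fin n) ℤ,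
      (X * Y).map (Int.cast : ℤ → ℚ)
        = (X.map (Int.cast : ℤ → ℚ)) * (Y.map (Int.cast : ℤ → ℚ)) :=
    fun X Y => Matrix.map_mul (f := Int.castRingHom ℚ)
  have htmQ : ∀ X : Matrix (Fin n) (Fin n) ℤ,
      (Xᵀ).map (Int.cast : ℤ → ℚ) = (X.map (Int.cast : ℤ → ℚ))ᵀ :=
    fun X => Matrix.transpose_map
  -- cast commutes with mulVec
  have hcastmv : ∀ (B : Matrix (Fin n) (Fin n) ℤ) (w : Fin n → ℤ) (j : Fin n),
      (((B *ᵥ w) j : ℤ) : ZMod p)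
        = ((B.map (Int.cast : ℤ → ZMod p)) *ᵥ (fun i => ((w i : ℤ) : ZMod p))) j := by
    intro B w j
    simp [Matrix.mulVec, dotProduct, Matrix.map_apply]
  -- entries of Wᵀ *ᵥ w as dot products
  have hWe : ∀ (w : Fin n → ℤ) (j : Fin n),
      (Wᵀ *ᵥ w) j = ((A ^ (j : ℕ)) *ᵥ fun _ => (1 : ℤ)) ⬝ᵥ w := by
    intro w j
    simp [hWdef, walkMatrix, Matrix.mulVec, dotProduct, Matrix.transpose_apply]
  -- symmetry swap
  have hswap : ∀ (w u : Fin n → ℤ), w ⬝ᵥ (A *ᵥ u) = (A *ᵥ w) ⬝ᵥ u := by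
    intro w u
    rw [Matrix.dotProduct_mulVec]
    nth_rewrite 1 [← hAs]
    rw [Matrix.vecMul_transpose]
  -- a good row of the adjugate
  obtain ⟨k0, i1, hk0i1⟩ : ∃ k i, ¬ (p:ℤ) ∣ adjugate W k i := by
    by_contra h
    push_neg at h
    have hmap0 : (adjugate W).map (Int.cast : ℤ → ZMod p) = 0 := by
      ext i j
      simpa [Matrix.map_apply, ZMod.intCast_zmod_eq_zero_iff_dvd] using h i j
    have hadj : adjugate (W.map (Int.cast : ℤ → ZMod p)) = 0 := by
      have h2 := (Int.castRingHom (ZMod p)).map_adjugate W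
      simp only [RingHom.mapMatrix_apply, Int.coe_castRingHom] at h2
      rw [← h2]
      simpa using hmap0
    have hdet0 : (W.map (Int.cast : ℤ → ZMod p)).det = 0 := by
      have h2 := (Int.castRingHom (ZMod p)).map_det W
      simp only [RingHom.mapMatrix_apply, Int.coe_castRingHom] at h2
      rw [← h2]
      simpa [ZMod.intCast_zmod_eq_zero_iff_dvd] using hpdvd
    exact aux_adj_ne_zero _ hrank hn hdet0 hadj
  set vs : Fin n → ℤ := fun i => adjugate W k0 i with hvs
  -- p² divides Wᵀ vs
  have hvs2 : ∀ j : Fin n, (p:ℤ)^2 ∣ (Wᵀ *ᵥ vs) j := by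
    intro j
    have : (Wᵀ *ᵥ vs) j = (adjugate W * W) k0 j := by
      simp [Matrix.mulVec, dotProduct, Matrix.mul_apply, Matrix.transpose_apply, hvs,
        mul_comm]
    rw [this, Matrix.adjugate_mul]
    by_cases h : k0 = j <;> simp [h] <;> exact hp2
  set e1 : Fin n → ℤ := (fun _ => (1:ℤ)) with he1
  -- Cayley-Hamilton
  have hchn : A.charpoly.natDegree = n := by
    rw [Matrix.charpoly_natDegree_eq_dim, Fintype.card_fin]
  have hc1 : A.charpoly.coeff n = 1 := by
    have h2 := A.charpoly_monic.coeff_natDegree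
    rwa [hchn] at h2
  have hCH : A ^ n = -(∑ k ∈ Finset.range n, A.charpoly.coeff k • A ^ k) := by
    have h0 := A.aeval_self_charpoly
    rw [Polynomial.aeval_eq_sum_range, hchn, Finset.sum_range_succ, hc1, one_smul] at h0
    exact (neg_eq_of_add_eq_zero_right h0).symm
  -- dot products with powers
  have hglt : ∀ m : ℕ, m < n → (p:ℤ)^2 ∣ ((A ^ m) *ᵥ e1) ⬝ᵥ vs := by
    intro m hlt
    have h2 := hvs2 ⟨m, hlt⟩
    rw [hWe] at h2
    simpa using h2
  have hg : ∀ m : ℕ, m ≤ n → (p:ℤ)^2 ∣ ((A ^ m) *ᵥ e1) ⬝ᵥ vs := by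
    intro m hm
    rcases lt_or_eq_of_le hm with hlt | heq
    · exact hglt m hlt
    · rw [heq, hCH, Matrix.neg_mulVec, neg_dotProduct, dvd_neg]
      rw [aux_sum_mulVec]
      exact Finset.dvd_sum fun k hk =>
        Dvd.dvd.mul_left (hglt k (Finset.mem_range.1 hk)) _
  -- mod p kernel setup
  set Cp : Matrix (Fin n) (Fin n) (ZMod p) := (W.map (Int.cast : ℤ → ZMod p))ᵀ with hCp
  have htm : (Wᵀ).map (Int.cast : ℤ → ZMod p) = Cp := by
    rw [hCp]; exact Matrix.transpose_map
  have hCprank : Cp.rank = n - 1 := by rw [hCp, Matrix.rank_transpose]; exact hrank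
  have hCpmv : ∀ (w : Fin n → ℤ), (∀ j, (p:ℤ) ∣ (Wᵀ *ᵥ w) j) →
      Cp *ᵥ (fun i => ((w i : ℤ) : ZMod p)) = 0 := by
    intro w hw
    funext j
    have h2 := hcastmv Wᵀ w j
    rw [htm] at h2
    rw [Pi.zero_apply, ← h2, ZMod.intCast_zmod_eq_zero_iff_dvd]
    exact hw j
  set vbar : Fin n → ZMod p := fun i => ((v i : ℤ) : ZMod p) with hvbar
  set vsb : Fin n → ZMod p := fun i => ((vs i : ℤ) : ZMod p) with hvsb
  have hvker : Cp *ᵥ vbar = 0 := by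
    apply hCpmv
    intro j
    rw [← ZMod.intCast_zmod_eq_zero_iff_dvd]
    exact hv j
  have hvsker : Cp *ᵥ vsb = 0 := by
    apply hCpmv
    intro j
    exact dvd_trans hpp (hvs2 j)
  have hvbar0 : vbar ≠ 0 := fun h => hi00 (congrFun h i00)
  have hvsb0 : vsb ≠ 0 := by
    intro h
    apply hk0i1
    rw [← ZMod.intCast_zmod_eq_zero_iff_dvd]
    exact congrFun h i1
  -- A vs is in the kernel mod p (in fact mod p²)
  have hAvdvd : ∀ j : Fin n, (p:ℤ)^2 ∣ (Wᵀ *ᵥ (A *ᵥ vs)) j := by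
    intro j
    have h2 : (Wᵀ *ᵥ (A *ᵥ vs)) j = ((A ^ ((j:ℕ)+1)) *ᵥ e1) ⬝ᵥ vs := by
      rw [hWe, hswap, Matrix.mulVec_mulVec, ← pow_succ']
    rw [h2]
    exact hg ((j:ℕ)+1) (Nat.succ_le_of_lt j.isLt)
  have hAvker : Cp *ᵥ (fun i => (((A *ᵥ vs) i : ℤ) : ZMod p)) = 0 :=
    hCpmv _ (fun j => dvd_trans hpp (hAvdvd j))
  obtain ⟨lamb, hlamb⟩ := aux_ker_span Cp hCprank hn vsb _ hvsker hvsb0 hAvker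
  obtain ⟨lam, rfl⟩ := ZMod.intCast_surjective lamb
  have hdvdu : ∀ i, (p:ℤ) ∣ ((A *ᵥ vs) i - lam * vs i) := by
    intro i
    rw [← ZMod.intCast_zmod_eq_zero_iff_dvd]
    push_cast
    have h2 := congrFun hlamb i
    simp only [Pi.smul_apply, smul_eq_mul] at h2
    rw [h2, hvsb]
    ring
  set z : Fin n → ℤ := fun i => ((A *ᵥ vs) i - lam * vs i) / p with hzdef
  have hz : ∀ i, (A *ᵥ vs) i = lam * vs i + p * z i := by
    intro i
    have h2 := Int.ediv_mul_cancel (hdvdu i)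
    rw [hzdef]
    dsimp only
    linarith [h2]
  have hAvsfun : A *ᵥ vs = lam • vs + (p:ℤ) • z := by
    funext i
    simp only [Pi.add_apply, Pi.smul_apply, smul_eq_mul]
    exact hz i
  -- z is in the kernel mod p
  have hzk : ∀ j, (p:ℤ) ∣ (Wᵀ *ᵥ z) j := by
    intro j
    have h1 : (Wᵀ *ᵥ (A *ᵥ vs)) j = lam * (Wᵀ *ᵥ vs) j + p * (Wᵀ *ᵥ z) j := by
      rw [hWe, hWe, hWe, hAvsfun, dotProduct_add, dotProduct_smul,
        dotProduct_smul, smul_eq_mul, smul_eq_mul]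
    have h2 : (p:ℤ)^2 ∣ p * (Wᵀ *ᵥ z) j := by
      have h3 : (p:ℤ) * (Wᵀ *ᵥ z) j = (Wᵀ *ᵥ (A *ᵥ vs)) j - lam * (Wᵀ *ᵥ vs) j := by
        rw [h1]; ring
      rw [h3]
      exact dvd_sub (hAvdvd j) (Dvd.dvd.mul_left (hvs2 j) lam)
    rw [pow_two] at h2
    exact (mul_dvd_mul_iff_left hp0).1 h2
  have hzker : Cp *ᵥ (fun i => ((z i : ℤ) : ZMod p)) = 0 := hCpmv z hzk
  obtain ⟨mu, hmu⟩ := aux_ker_span Cp hCprank hn vsb _ hvsker hvsb0 hzker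
  -- vbar ⬝ vbar = 0 mod p, using the matrix M0
  have hMtM : M0ᵀ * M0 = ((p:ℤ)^2) • (1 : Matrix (Fin n) (Fin n) ℤ) := by
    have h1 : (M0ᵀ * M0).map (Int.cast : ℤ → ℚ)
        = (((p:ℤ)^2) • (1 : Matrix (Fin n) (Fin n) ℤ)).map (Int.cast : ℤ → ℚ) := by
      rw [hmapmulQ, htmQ, hM0, Matrix.transpose_smul, Matrix.smul_mul, Matrix.mul_smul, hQorth]
      ext i j
      simp only [Matrix.map_apply, Matrix.smul_apply, smul_eq_mul, Matrix.one_apply]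
      split <;> push_cast <;> ring
    ext i j
    have h2 := congrFun (congrFun h1 i) j
    simp only [Matrix.map_apply] at h2
    exact_mod_cast h2
  obtain ⟨a0, b0, hM00⟩ : ∃ a b, ((M0 a b : ℤ) : ZMod p) ≠ 0 := by
    by_contra h
    push_neg at h
    have h2 : M0.map (Int.cast : ℤ → ZMod p) = 0 := by
      ext a b; simpa [Matrix.map_apply] using h a b
    rw [h2, Matrix.rank_zero] at hM0rank
    exact absurd hM0rank (by norm_num)
  obtain ⟨c0, hc0⟩ := hgen b0
  have hc00 : ((c0 : ZMod p)) ≠ 0 := by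
    intro h
    apply hM00
    rw [hc0 a0, h, zero_mul]
  have hb0sq : (∑ i, ((M0 i b0 : ℤ) : ZMod p) * ((M0 i b0 : ℤ) : ZMod p)) = 0 := by
    have h2 := congrFun (congrFun hMtM b0) b0
    simp only [Matrix.mul_apply, Matrix.transpose_apply, Matrix.smul_apply, Matrix.one_apply_eq,
      smul_eq_mul, mul_one] at h2
    have h3 : ((((p:ℤ)^2 : ℤ)) : ZMod p) = 0 := by
      rw [ZMod.intCast_zmod_eq_zero_iff_dvd]; exact hpp
    calc (∑ i, ((M0 i b0 : ℤ) : ZMod p) * ((M0 i b0 : ℤ) : ZMod p))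
        = (((∑ i, M0 i b0 * M0 i b0 : ℤ)) : ZMod p) := by push_cast; ring
      _ = 0 := by rw [h2]; exact h3
  have hvv : (∑ i, vbar i * vbar i) = 0 := by
    have h2 : (∑ i, ((M0 i b0 : ℤ) : ZMod p) * ((M0 i b0 : ℤ) : ZMod p))
        = (c0 : ZMod p) * (c0 : ZMod p) * ∑ i, vbar i * vbar i := by
      rw [Finset.mul_sum]
      apply Finset.sum_congr rfl
      intro i _
      rw [hc0 i, hvbar]
      ring
    rw [h2] at hb0sq
    rcases mul_eq_zero.1 hb0sq with h | h
    · exact absurd (by rcases mul_eq_zero.1 h with h' | h' <;> exact h') hc00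
    · exact h
  -- vsb is a multiple of vbar
  obtain ⟨cc, hcc⟩ := aux_ker_span Cp hCprank hn vbar vsb hvker hvbar0 hvsker
  have hcc0 : cc ≠ 0 := by
    intro h
    apply hvsb0
    rw [hcc, h, zero_smul]
  have hSmod : (((vs ⬝ᵥ vs : ℤ)) : ZMod p) = 0 := by
    have h2 : (((vs ⬝ᵥ vs : ℤ)) : ZMod p) = ∑ i, vsb i * vsb i := by
      simp only [dotProduct, hvsb]
      push_cast
      rfl
    rw [h2]
    have h3 : ∀ i, vsb i = cc * vbar i := fun i => by
      rw [hcc]; simp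
    calc ∑ i, vsb i * vsb i = cc * cc * ∑ i, vbar i * vbar i := by
          rw [Finset.mul_sum]
          exact Finset.sum_congr rfl fun i _ => by rw [h3 i]; ring
      _ = 0 := by rw [hvv, mul_zero]
  have hS : (p:ℤ) ∣ vs ⬝ᵥ vs := by
    rw [← ZMod.intCast_zmod_eq_zero_iff_dvd]; exact hSmod
  -- p divides vs ⬝ z
  have hs1 : (p:ℤ) ∣ vs ⬝ᵥ z := by
    rw [← ZMod.intCast_zmod_eq_zero_iff_dvd]
    have h2 : (((vs ⬝ᵥ z : ℤ)) : ZMod p) = ∑ i, vsb i * ((z i : ℤ) : ZMod p) := by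
      simp only [dotProduct, hvsb]
      push_cast
      rfl
    rw [h2]
    have h3 : ∀ i, ((z i : ℤ) : ZMod p) = mu * vsb i := fun i => by
      simpa using congrFun hmu i
    calc ∑ i, vsb i * ((z i : ℤ) : ZMod p) = mu * ∑ i, vsb i * vsb i := by
          rw [Finset.mul_sum]
          exact Finset.sum_congr rfl fun i _ => by rw [h3 i]; ring
      _ = mu * (((vs ⬝ᵥ vs : ℤ)) : ZMod p) := by
          congr 1
          simp only [dotProduct, hvsb]
          push_cast
          rfl
      _ = 0 := by rw [hSmod, mul_zero]
  -- key quadratic fact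
  have hQ1 : (p:ℤ)^2 ∣ (vs ⬝ᵥ (A *ᵥ vs)) - lam * (vs ⬝ᵥ vs) := by
    have h2 : vs ⬝ᵥ (A *ᵥ vs) = lam * (vs ⬝ᵥ vs) + p * (vs ⬝ᵥ z) := by
      rw [hAvsfun, dotProduct_add, dotProduct_smul, dotProduct_smul,
        smul_eq_mul, smul_eq_mul]
    rw [h2, add_sub_cancel_left, pow_two]
    exact mul_dvd_mul_left _ hs1
  -- column decompositions
  have hcol : ∀ jdx : Fin n, ∃ d : ℤ, ∀ i, (p:ℤ) ∣ M0 i jdx - d * vs i := by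
    intro jdx
    obtain ⟨c, hc⟩ := hgen jdx
    obtain ⟨d, hd⟩ := ZMod.intCast_surjective ((c : ZMod p) * cc⁻¹)
    refine ⟨d, fun i => ?_⟩
    rw [← ZMod.intCast_zmod_eq_zero_iff_dvd]
    push_cast
    rw [hc i, hd]
    have h3 : vsb i = cc * vbar i := by rw [hcc]; simp
    have h4 : ((vs i : ℤ) : ZMod p) = vsb i := rfl
    rw [h4, h3]
    have h5 : ((v i : ℤ) : ZMod p) = vbar i := rfl
    rw [h5]
    field_simp
    ring
  intro a b
  obtain ⟨da, hda⟩ := hcol a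
  obtain ⟨db, hdb⟩ := hcol b
  set xa : Fin n → ℤ := fun i => (M0 i a - da * vs i) / p with hxadef
  set xb : Fin n → ℤ := fun i => (M0 i b - db * vs i) / p with hxbdef
  have hxa : (fun i => M0 i a) = da • vs + (p:ℤ) • xa := by
    funext i
    simp only [Pi.add_apply, Pi.smul_apply, smul_eq_mul, hxadef]
    have h2 := Int.ediv_mul_cancel (hda i)
    linarith [h2]
  have hxb : (fun i => M0 i b) = db • vs + (p:ℤ) • xb := by
    funext i
    simp only [Pi.add_apply, Pi.smul_apply, smul_eq_mul, hxbdef]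
    have h2 := Int.ediv_mul_cancel (hdb i)
    linarith [h2]
  -- entries as dot products
  have hTdot : (M0ᵀ * (A * M0)) a b = (fun i => M0 i a) ⬝ᵥ (A *ᵥ (fun i => M0 i b)) := by
    simp only [Matrix.mul_apply, Matrix.mulVec, dotProduct, Matrix.transpose_apply]
  have hPdot : (M0ᵀ * M0) a b = (fun i => M0 i a) ⬝ᵥ (fun i => M0 i b) := by
    simp only [Matrix.mul_apply, dotProduct, Matrix.transpose_apply]
  have hPdvd : (p:ℤ)^2 ∣ (M0ᵀ * M0) a b := by
    rw [hMtM]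
    simp only [Matrix.smul_apply, Matrix.one_apply, smul_eq_mul]
    split <;> simp
  -- expansions
  have h1 : vs ⬝ᵥ (A *ᵥ xb) = lam * (vs ⬝ᵥ xb) + p * (z ⬝ᵥ xb) := by
    rw [hswap, hAvsfun, add_dotProduct, smul_dotProduct, smul_dotProduct,
      smul_eq_mul, smul_eq_mul]
  have h2 : xa ⬝ᵥ (A *ᵥ vs) = lam * (xa ⬝ᵥ vs) + p * (xa ⬝ᵥ z) := by
    rw [hAvsfun, dotProduct_add, dotProduct_smul, dotProduct_smul,
      smul_eq_mul, smul_eq_mul]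
  have hT : (M0ᵀ * (A * M0)) a b
      = da * db * (vs ⬝ᵥ (A *ᵥ vs)) + (p * da) * (vs ⬝ᵥ (A *ᵥ xb))
        + (p * db) * (xa ⬝ᵥ (A *ᵥ vs)) + (p * p) * (xa ⬝ᵥ (A *ᵥ xb)) := by
    rw [hTdot, hxa, hxb]
    simp only [Matrix.mulVec_add, Matrix.mulVec_smul, add_dotProduct,
      dotProduct_add, smul_dotProduct, dotProduct_smul, smul_eq_mul]
    ring
  have hP : (M0ᵀ * M0) a b
      = da * db * (vs ⬝ᵥ vs) + (p * da) * (vs ⬝ᵥ xb)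
        + (p * db) * (xa ⬝ᵥ vs) + (p * p) * (xa ⬝ᵥ xb) := by
    rw [hPdot, hxa, hxb]
    simp only [add_dotProduct, dotProduct_add, smul_dotProduct,
      dotProduct_smul, smul_eq_mul]
    ring
  have hfinal : (M0ᵀ * (A * M0)) a b
      = da * db * ((vs ⬝ᵥ (A *ᵥ vs)) - lam * (vs ⬝ᵥ vs)) + lam * ((M0ᵀ * M0) a b)
        + p * p * (da * (z ⬝ᵥ xb) + db * (xa ⬝ᵥ z) + (xa ⬝ᵥ (A *ᵥ xb)) - lam * (xa ⬝ᵥ xb)) := by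
    rw [hT, hP, h1, h2]
    ring
  have hTdvd : (p:ℤ)^2 ∣ (M0ᵀ * (A * M0)) a b := by
    rw [hfinal]
    apply dvd_add
    apply dvd_add
    · exact Dvd.dvd.mul_left hQ1 _
    · exact Dvd.dvd.mul_left hPdvd lam
    · rw [pow_two]; exact dvd_mul_right _ _
  obtain ⟨t, ht⟩ := hTdvd
  refine ⟨t, ?_⟩
  -- conclude over ℚ
  have hQM : Q = ((p:ℚ)⁻¹) • (M0.map (Int.cast : ℤ → ℚ)) := by
    rw [hM0, smul_smul, inv_mul_cancel₀ hpQ0, one_smul]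
  have hmapT : ((M0ᵀ * (A * M0)).map (Int.cast : ℤ → ℚ))
      = (M0.map (Int.cast : ℤ → ℚ))ᵀ * (A.map (Int.cast : ℤ → ℚ) * M0.map (Int.cast : ℤ → ℚ)) := by
    rw [hmapmulQ, hmapmulQ, htmQ]
  have hgoal : (Qᵀ * A.map (Int.cast : ℤ → ℚ) * Q) a b
      = (p:ℚ)⁻¹ * (p:ℚ)⁻¹ * (((M0ᵀ * (A * M0)) a b : ℤ) : ℚ) := by
    rw [hQM, Matrix.transpose_smul, Matrix.smul_mul, Matrix.smul_mul, Matrix.mul_smul]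
    rw [mul_assoc (M0.map (Int.cast : ℤ → ℚ))ᵀ]
    rw [← hmapT]
    simp only [Matrix.smul_apply, smul_eq_mul, Matrix.map_apply]
    ring
  rw [hgoal, ht]
  push_cast
  field_simp

theorem stmt11 (n p : ℕ) (hp : p.Prime) (hpodd : Odd p)
    (A : Matrix (Fin n) (Fin n) ℤ) (hA : IsAdjacencyMat A)
    (hctrl : (walkMatrix A).det ≠ 0)
    (hp2 : ((p : ℤ)) ^ 2 ∣ (walkMatrix A).det)
    (hrank : ((walkMatrix A).map (Int.cast : ℤ → ZMod p)).rank = n - 1)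
    (v : Fin n → ℤ)
    (hv : ∀ i, ((((walkMatrix A)ᵀ *ᵥ v) i : ℤ) : ZMod p) = 0)
    (hv0 : ∃ i, ((v i : ℤ) : ZMod p) ≠ 0)
    (Q : Matrix (Fin n) (Fin n) ℚ) (hQ : GeneratedFrom p Q v) :
    ∀ i j, ∃ m : ℤ, (Qᵀ * A.map (Int.cast : ℤ → ℚ) * Q) i j = (m : ℚ) := by
  obtain ⟨⟨⟨hQorth, hQreg⟩, hlev, M0, hM0, hM0rank⟩, hgen⟩ := hQ
  exact stmt11' n p hp hpodd A hA.1 hctrl hp2 hrank v hv hv0 Q hQorth M0 hM0 hM0rank (hgen M0 hM0)
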